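/- Let n ≥ 2, G = SL(n,ℝ), Γ = SL(n,ℤ), and let X = G/Γ carry the quotient topology, with G acting on X by left translations. Let 𝔞 be a nonzero linear subspace of the space of real diagonal n×n matrices of trace zero, and let A = exp(𝔞) ⊆ G. Then there exists x ∈ X such that the trajectory Ax is divergent, i.e., the orbit map A → X, a ↦ a·x, is proper: for every compact K ⊆ X the set {a ∈ A : a·x ∈ K} is compact. (This is the instance of the paper's Theorem 1.2 for the ℚ-simple group SL_n, where the ℚ-rank is n−1 and automatically dim A ≤ n−1.) -/

import Mathlib

open Matrix

/-- The topology on `SL(n,ℝ)` induced from the space of `n × n` real matrices. -/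
noncomputable instance SLtop (n : ℕ) : TopologicalSpace (SpecialLinearGroup (Fin n) ℝ) :=
  TopologicalSpace.induced (fun A => (A : Matrix (Fin n) (Fin n) ℝ)) inferInstance

namespace DivergentAux

variable {n : ℕ}

abbrev SL (n : ℕ) := SpecialLinearGroup (Fin n) ℝ
abbrev Mat (n : ℕ) := Matrix (Fin n) (Fin n) ℝ

lemma continuous_coeSL : Continuous (fun g : SL n => (g : Mat n)) := continuous_induced_dom

lemma isInducing_coeSL : Topology.IsInducing (fun g : SL n => (g : Mat n)) := ⟨rfl⟩

lemma isEmbedding_coeSL : Topology.IsEmbedding (fun g : SL n => (g : Mat n)) :=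
  ⟨isInducing_coeSL, Subtype.coe_injective⟩

lemma topGroupSL : IsTopologicalGroup (SL n) := by
  have hc : Continuous (fun g : SL n => (g : Mat n)) := continuous_coeSL
  refine { continuous_mul := ?_, continuous_inv := ?_ }
  · apply continuous_induced_rng.2
    rw [show ((fun g : SL n => (g : Mat n)) ∘ (fun p : SL n × SL n => p.1 * p.2)) =
        fun p : SL n × SL n => ((p.1 : Mat n) * (p.2 : Mat n)) from
      funext fun p => Matrix.SpecialLinearGroup.coe_mul _ _]
    exact (hc.comp continuous_fst).matrix_mul (hc.comp continuous_snd)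
  · apply continuous_induced_rng.2
    rw [show ((fun g : SL n => (g : Mat n)) ∘ (fun g : SL n => g⁻¹)) =
        fun g : SL n => Matrix.adjugate (g : Mat n) from funext fun g => Matrix.SpecialLinearGroup.coe_inv g]
    exact hc.matrix_adjugate

/-- compactness of entrywise boxes -/
lemma isCompact_box (lo hi : Mat n) :
    IsCompact {m : Mat n | ∀ i j, m i j ∈ Set.Icc (lo i j) (hi i j)} := by
  have : {m : Mat n | ∀ i j, m i j ∈ Set.Icc (lo i j) (hi i j)} =
      Set.pi Set.univ (fun i => Set.pi Set.univ fun j => Set.Icc (lo i j) (hi i j)) := by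
    ext m
    exact ⟨fun h i _ j _ => h i j, fun h i j => h i (Set.mem_univ i) j (Set.mem_univ j)⟩
  rw [this]
  exact isCompact_univ_pi fun i => isCompact_univ_pi fun j => isCompact_Icc

lemma isOpen_obox (lo hi : Mat n) :
    IsOpen {m : Mat n | ∀ i j, m i j ∈ Set.Ioo (lo i j) (hi i j)} := by
  have : {m : Mat n | ∀ i j, m i j ∈ Set.Ioo (lo i j) (hi i j)} =
      Set.pi Set.univ (fun i => Set.pi Set.univ fun j => Set.Ioo (lo i j) (hi i j)) := by
    ext m
    exact ⟨fun h i _ j _ => h i j, fun h i j => h i (Set.mem_univ i) j (Set.mem_univ j)⟩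
  rw [this]
  exact isOpen_set_pi Set.finite_univ fun i _ =>
    isOpen_set_pi Set.finite_univ fun j _ => isOpen_Ioo

lemma isClosed_range_coeSL : IsClosed (Set.range (fun g : SL n => (g : Mat n))) := by
  have : Set.range (fun g : SL n => (g : Mat n)) = (fun m : Mat n => m.det) ⁻¹' {1} := by
    ext m
    constructor
    · rintro ⟨g, rfl⟩; exact g.2
    · intro hm; exact ⟨⟨m, hm⟩, rfl⟩
  rw [this]
  exact isClosed_singleton.preimage (Continuous.matrix_det continuous_id)

end DivergentAux


open DivergentAux

/-- **Existence of divergent trajectories for diagonal subgroups of `SL(n,ℝ)` acting on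
`SL(n,ℝ)/SL(n,ℤ)`** (instance of Theorem 1.2 of the paper for the `ℚ`-simple group `SL_n`).
Let `n ≥ 2`, `G = SL(n,ℝ)`, `Γ = SL(n,ℤ)` (embedded in `G`), and let `X = G/Γ` with the
quotient topology and the left-translation action of `G`. Let `𝔞` be a nonzero linear subspace
of the diagonal trace-zero real `n × n` matrices and `A = exp 𝔞 ⊆ G`. Then there is an `x ∈ X`
whose `A`-trajectory is divergent: for every compact `K ⊆ X` the set
`{a ∈ A : a • x ∈ K}` is compact. -/
theorem exists_divergent_trajectory_SL
    (n : ℕ) (hn : 2 ≤ n)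
    (Γ : Subgroup (SpecialLinearGroup (Fin n) ℝ))
    (hΓ : Γ = (SpecialLinearGroup.map (n := Fin n) (Int.castRingHom ℝ)).range)
    (𝔞 : Submodule ℝ (Matrix (Fin n) (Fin n) ℝ))
    (h𝔞ne : 𝔞 ≠ ⊥)
    (h𝔞diag : ∀ M ∈ 𝔞, M.IsDiag)
    (h𝔞tr : ∀ M ∈ 𝔞, M.trace = 0)
    (A : Set (SpecialLinearGroup (Fin n) ℝ))
    (hA : A = {a : SpecialLinearGroup (Fin n) ℝ | ∃ M ∈ 𝔞, (↑a : Matrix (Fin n) (Fin n) ℝ) = NormedSpace.exp M}) :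
    ∃ x : SpecialLinearGroup (Fin n) ℝ ⧸ Γ,
      ∀ K : Set (SpecialLinearGroup (Fin n) ℝ ⧸ Γ), IsCompact K →
        IsCompact {a : SpecialLinearGroup (Fin n) ℝ | a ∈ A ∧ a • x ∈ K} := by
  classical
  haveI : IsTopologicalGroup (SL n) := topGroupSL
  -- integrality characterization of Γ
  have hΓint : ∀ g ∈ Γ, ∀ i j, ∃ k : ℤ, ((k : ℝ)) = (g : Mat n) i j := by
    intro g hg i j
    rw [hΓ] at hg
    obtain ⟨B, hB⟩ := hg
    refine ⟨(B : Matrix (Fin n) (Fin n) ℤ) i j, ?_⟩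
    rw [← hB, SpecialLinearGroup.map_apply_coe]
    simp [Matrix.map_apply]
  have hΓmem : ∀ g : SL n, (∀ i j, ∃ k : ℤ, ((k : ℝ)) = (g : Mat n) i j) → g ∈ Γ := by
    intro g hg
    rw [hΓ]
    set B : Matrix (Fin n) (Fin n) ℤ := fun i j => (hg i j).choose with hBdef
    have hB : B.map (Int.castRingHom ℝ) = (g : Mat n) := by
      ext i j
      exact (hg i j).choose_spec
    have hdet : B.det = 1 := by
      have h1 : (Int.castRingHom ℝ) B.det = 1 := by
        rw [RingHom.map_det, RingHom.mapMatrix_apply, hB]; exact g.2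
      have h2 : ((B.det : ℝ)) = 1 := by simpa using h1
      exact_mod_cast h2
    refine ⟨⟨B, hdet⟩, ?_⟩
    apply Subtype.ext
    show B.map (Int.castRingHom ℝ) = (g : Mat n)
    exact hB
  -- Γ is closed
  have hΓclosed : IsClosed ((Γ : Set (SL n))) := by
    have heq : (Γ : Set (SL n)) = (fun g : SL n => (g : Mat n)) ⁻¹'
        (⋂ i, ⋂ j, (fun m : Mat n => m i j) ⁻¹' Set.range ((↑) : ℤ → ℝ)) := by
      ext g
      simp only [Set.mem_preimage, Set.mem_iInter, Set.mem_range, SetLike.mem_coe]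
      constructor
      · intro hg i j; exact hΓint g hg i j
      · intro hg; exact hΓmem g fun i j => hg i j
    rw [heq]
    refine IsClosed.preimage continuous_coeSL ?_
    refine isClosed_iInter fun i => isClosed_iInter fun j => ?_
    exact Int.isClosedEmbedding_coe_real.isClosed_range.preimage
      ((continuous_apply j).comp (continuous_apply i))
  -- the quotient is T2
  haveI : T2Space (SL n ⧸ Γ) := by
    refine ⟨fun x y hxy => ?_⟩
    obtain ⟨g, rfl⟩ := QuotientGroup.mk_surjective x
    obtain ⟨h, rfl⟩ := QuotientGroup.mk_surjective y
    have hR : IsOpen {p : SL n × SL n | p.1⁻¹ * p.2 ∈ Γ}ᶜ :=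
      (hΓclosed.preimage ((continuous_fst.inv).mul continuous_snd)).isOpen_compl
    have hgh : (g, h) ∈ {p : SL n × SL n | p.1⁻¹ * p.2 ∈ Γ}ᶜ := by
      intro hmem
      exact hxy (QuotientGroup.eq.mpr hmem)
    obtain ⟨U, V, hU, hV, hgU, hhV, hUV⟩ := isOpen_prod_iff.mp hR g h hgh
    refine ⟨QuotientGroup.mk '' U, QuotientGroup.mk '' V,
      QuotientGroup.isOpenMap_coe U hU, QuotientGroup.isOpenMap_coe V hV,
      ⟨g, hgU, rfl⟩, ⟨h, hhV, rfl⟩, ?_⟩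
    rw [Set.disjoint_left]
    rintro z ⟨u, hu, rfl⟩ ⟨v, hv, hvu⟩
    have : u⁻¹ * v ∈ Γ := QuotientGroup.eq.mp hvu.symm
    exact hUV (Set.mk_mem_prod hu hv) this
  refine ⟨QuotientGroup.mk 1, ?_⟩
  intro K hK
  -- diagonal exponential facts
  have hFdiag : ∀ M ∈ 𝔞, NormedSpace.exp M = diagonal (fun i => Real.exp (M i i)) := by
    intro M hM
    have hd : Matrix.diagonal (Matrix.diag M) = M := (h𝔞diag M hM).diagonal_diag
    calc NormedSpace.exp M = NormedSpace.exp (diagonal (Matrix.diag M)) := by rw [hd]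
    _ = diagonal (NormedSpace.exp (Matrix.diag M)) := Matrix.exp_diagonal _
    _ = diagonal fun i => Real.exp (M i i) := by
        rw [Pi.exp_def]
        congr 1
        funext i
        rw [← Real.exp_eq_exp_ℝ]
        rfl
  have hFdet : ∀ M ∈ 𝔞, (NormedSpace.exp M).det = 1 := by
    intro M hM
    rw [hFdiag M hM, Matrix.det_diagonal, ← Real.exp_sum]
    have : ∑ i, M i i = 0 := h𝔞tr M hM
    rw [this, Real.exp_zero]
  -- the orbit map on 𝔞
  set F : 𝔞 → SL n := fun M => ⟨NormedSpace.exp (M : Mat n), hFdet M.1 M.2⟩ with hFdef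
  have hFcoe : ∀ M : 𝔞, (F M : Mat n) = diagonal (fun i => Real.exp ((M : Mat n) i i)) :=
    fun M => hFdiag M.1 M.2
  have hFcont : Continuous F := by
    apply continuous_induced_rng.2
    rw [show ((fun g : SL n => (g : Mat n)) ∘ F) =
        fun M : 𝔞 => diagonal (fun i => Real.exp ((M : Mat n) i i)) from
      funext fun M => hFcoe M]
    refine Continuous.matrix_diagonal ?_
    exact continuous_pi fun i => Real.continuous_exp.comp
      (((continuous_apply i).comp ((continuous_apply i).comp continuous_subtype_val)))
  have hsmul : ∀ a : SL n, a • (QuotientGroup.mk 1 : SL n ⧸ Γ) = QuotientGroup.mk a := by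
    intro a
    rw [MulAction.Quotient.smul_mk]
    simp
  -- description of the set in question
  set S : Set 𝔞 := {M : 𝔞 | (QuotientGroup.mk (F M) : SL n ⧸ Γ) ∈ K} with hSdef
  have hTS : {a : SL n | a ∈ A ∧ a • (QuotientGroup.mk 1 : SL n ⧸ Γ) ∈ K} = F '' S := by
    ext a
    constructor
    · rintro ⟨haA, haK⟩
      rw [hA] at haA
      obtain ⟨M, hM𝔞, hMa⟩ := haA
      have hFa : F ⟨M, hM𝔞⟩ = a := Subtype.ext hMa.symm
      refine ⟨⟨M, hM𝔞⟩, ?_, hFa⟩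
      show (QuotientGroup.mk (F ⟨M, hM𝔞⟩) : SL n ⧸ Γ) ∈ K
      rw [hFa, ← hsmul a]
      exact haK
    · rintro ⟨M, hMS, rfl⟩
      refine ⟨?_, ?_⟩
      · rw [hA]; exact ⟨M.1, M.2, rfl⟩
      · rw [hsmul]; exact hMS
  rw [hTS]
  -- lift K to a compact set C in SL n
  obtain ⟨C, hCcomp, hKC⟩ : ∃ C : Set (SL n), IsCompact C ∧
      K ⊆ QuotientGroup.mk '' C := by
    set W : SL n → Set (SL n) := fun s => (fun g : SL n => (g : Mat n)) ⁻¹'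
      {m : Mat n | ∀ i j, m i j ∈ Set.Ioo ((s : Mat n) i j - 1) ((s : Mat n) i j + 1)} with hWdef
    set B : SL n → Set (SL n) := fun s => (fun g : SL n => (g : Mat n)) ⁻¹'
      {m : Mat n | ∀ i j, m i j ∈ Set.Icc ((s : Mat n) i j - 1) ((s : Mat n) i j + 1)} with hBdef
    have hWopen : ∀ s, IsOpen (W s) := fun s =>
      (isOpen_obox _ _).preimage continuous_coeSL
    have hWB : ∀ s, W s ⊆ B s := by
      intro s g hg i j
      exact ⟨le_of_lt (hg i j).1, le_of_lt (hg i j).2⟩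
    have hBcomp : ∀ s, IsCompact (B s) := by
      intro s
      rw [isEmbedding_coeSL.isCompact_iff]
      have himg : (fun g : SL n => (g : Mat n)) '' (B s) =
          {m : Mat n | ∀ i j, m i j ∈ Set.Icc ((s : Mat n) i j - 1) ((s : Mat n) i j + 1)} ∩
          Set.range (fun g : SL n => (g : Mat n)) := by
        rw [hBdef]
        exact Set.image_preimage_eq_inter_range
      rw [himg]
      exact (isCompact_box _ _).inter_right isClosed_range_coeSL
    have hmemW : ∀ s : SL n, s ∈ W s := by
      intro s i j
      constructor <;> simp
    have hcover : K ⊆ ⋃ s : SL n, QuotientGroup.mk '' (W s) := by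
      intro q hq
      obtain ⟨g, rfl⟩ := QuotientGroup.mk_surjective q
      exact Set.mem_iUnion.mpr ⟨g, ⟨g, hmemW g, rfl⟩⟩
    obtain ⟨t, ht⟩ := hK.elim_finite_subcover (fun s : SL n => QuotientGroup.mk '' (W s))
      (fun s => QuotientGroup.isOpenMap_coe _ (hWopen s)) hcover
    refine ⟨⋃ s ∈ t, B s, t.isCompact_biUnion (fun s _ => hBcomp s), ?_⟩
    intro q hq
    obtain ⟨s, hst, g, hgW, rfl⟩ := Set.mem_iUnion₂.mp (ht hq)
    exact ⟨g, Set.mem_biUnion hst (hWB s hgW), rfl⟩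
  -- entrywise bound on inverses over C
  obtain ⟨E, hE1, hE⟩ : ∃ E : ℝ, 1 ≤ E ∧ ∀ c ∈ C, ∀ i j,
      |((c⁻¹ : SL n) : Mat n) i j| ≤ E := by
    have hC' : IsCompact ((fun c : SL n => ((c⁻¹ : SL n) : Mat n)) '' C) :=
      hCcomp.image (continuous_coeSL.comp continuous_inv)
    set f : Mat n → ℝ := fun m => ∑ i, ∑ j, |m i j| with hfdef
    have hfc : Continuous f := by
      refine continuous_finset_sum _ fun i _ => continuous_finset_sum _ fun j _ => ?_
      exact ((continuous_apply j).comp (continuous_apply i)).abs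
    obtain ⟨E0, hE0⟩ := (hC'.image hfc).bddAbove
    refine ⟨max E0 1, le_max_right _ _, ?_⟩
    intro c hc i j
    have h1 : |((c⁻¹ : SL n) : Mat n) i j| ≤ f ((c⁻¹ : SL n) : Mat n) := by
      rw [hfdef]
      calc |((c⁻¹ : SL n) : Mat n) i j| ≤ ∑ j', |((c⁻¹ : SL n) : Mat n) i j'| :=
        Finset.single_le_sum (f := fun j' => |((c⁻¹ : SL n) : Mat n) i j'|) (fun j' _ => abs_nonneg _) (Finset.mem_univ j)
      _ ≤ ∑ i', ∑ j', |((c⁻¹ : SL n) : Mat n) i' j'| :=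
        Finset.single_le_sum (f := fun i' => ∑ j', |((c⁻¹ : SL n) : Mat n) i' j'|)
          (fun i' _ => Finset.sum_nonneg fun j' _ => abs_nonneg _) (Finset.mem_univ i)
    have h2 : f ((c⁻¹ : SL n) : Mat n) ≤ E0 :=
      hE0 ⟨_, ⟨_, hc, rfl⟩, rfl⟩
    exact le_trans h1 (le_trans h2 (le_max_left _ _))
  have hlogE : 0 ≤ Real.log E := Real.log_nonneg hE1
  set R : ℝ := n * Real.log E with hRdef
  have hR0 : 0 ≤ R := mul_nonneg (Nat.cast_nonneg n) hlogE
  -- main bound: any M ∈ S has all entries bounded by R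
  have hbound : ∀ M ∈ S, ∀ i j, |(M : Mat n) i j| ≤ R := by
    intro M hMS i j
    obtain ⟨c, hcC, hceq⟩ := hKC hMS
    set γ : SL n := c⁻¹ * F M with hγdef
    have hγΓ : γ ∈ Γ := QuotientGroup.eq.mp hceq
    have hγcoe : (γ : Mat n) = ((c⁻¹ : SL n) : Mat n) * diagonal (fun i => Real.exp ((M : Mat n) i i)) := by
      rw [hγdef, Matrix.SpecialLinearGroup.coe_mul, hFcoe]
    set d : Fin n → ℝ := fun i => (M : Mat n) i i with hddef
    -- lower bound on each d j
    have hdlow : ∀ j, -Real.log E ≤ d j := by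
      intro j
      have hcol : ∃ i, (γ : Mat n) i j ≠ 0 := by
        by_contra hcon
        push_neg at hcon
        have : (γ : Mat n).det = 0 := Matrix.det_eq_zero_of_column_eq_zero j hcon
        rw [γ.2] at this
        norm_num at this
      obtain ⟨i0, hi0⟩ := hcol
      obtain ⟨k, hk⟩ := hΓint γ hγΓ i0 j
      have hk0 : k ≠ 0 := by
        rintro rfl
        rw [← hk] at hi0
        norm_num at hi0
      have h1k : (1 : ℝ) ≤ |(γ : Mat n) i0 j| := by
        rw [← hk]
        rw [← Int.cast_abs]
        exact_mod_cast Int.one_le_abs hk0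
      have hentry : (γ : Mat n) i0 j = ((c⁻¹ : SL n) : Mat n) i0 j * Real.exp (d j) := by
        rw [hγcoe, Matrix.mul_diagonal]
      have h2 : (1 : ℝ) ≤ E * Real.exp (d j) := by
        calc (1 : ℝ) ≤ |(γ : Mat n) i0 j| := h1k
        _ = |((c⁻¹ : SL n) : Mat n) i0 j| * Real.exp (d j) := by
            rw [hentry, abs_mul, abs_of_pos (Real.exp_pos _)]
        _ ≤ E * Real.exp (d j) := by
            apply mul_le_mul_of_nonneg_right (hE c hcC i0 j) (Real.exp_pos _).le
      have h3 : E⁻¹ ≤ Real.exp (d j) := by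
        rw [inv_le_iff_one_le_mul₀ (lt_of_lt_of_le one_pos hE1)]
        linarith [h2]
      have h4 : Real.log E⁻¹ ≤ d j := by
        calc Real.log E⁻¹ ≤ Real.log (Real.exp (d j)) :=
          Real.log_le_log (inv_pos.mpr (lt_of_lt_of_le one_pos hE1)) h3
        _ = d j := Real.log_exp _
      rwa [Real.log_inv] at h4
    -- trace zero
    have htr : ∑ i, d i = 0 := h𝔞tr M.1 M.2
    -- upper bound on each d j
    have hdup : ∀ j, d j ≤ R := by
      intro j
      have hsplit : d j + ∑ i ∈ Finset.univ.erase j, d i = ∑ i, d i :=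
        Finset.add_sum_erase Finset.univ d (Finset.mem_univ j)
      have h5 : d j = ∑ i ∈ Finset.univ.erase j, (- d i) := by
        rw [Finset.sum_neg_distrib]
        rw [htr] at hsplit
        linarith
      calc d j = ∑ i ∈ Finset.univ.erase j, (- d i) := h5
      _ ≤ ∑ _i ∈ Finset.univ.erase j, Real.log E :=
        Finset.sum_le_sum fun i _ => by linarith [hdlow i]
      _ = (Finset.univ.erase j).card * Real.log E := by
        rw [Finset.sum_const, nsmul_eq_mul]
      _ ≤ R := by
        rw [hRdef]
        apply mul_le_mul_of_nonneg_right _ hlogE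
        have : (Finset.univ.erase j).card ≤ n :=
          le_trans Finset.card_erase_le (by simp)
        exact_mod_cast this
    have hdabs : ∀ j, |d j| ≤ R := by
      intro j
      rw [abs_le]
      refine ⟨?_, hdup j⟩
      have : Real.log E ≤ R := by
        rw [hRdef]
        nlinarith [hlogE, (show (1:ℝ) ≤ n by exact_mod_cast le_trans one_le_two hn)]
      linarith [hdlow j]
    by_cases hij : i = j
    · subst hij; exact hdabs i
    · have : (M : Mat n) i j = 0 := h𝔞diag M.1 M.2 hij
      rw [this]; simpa using hR0
  -- S is compact
  have hScomp : IsCompact S := by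
    have hSsub : S ⊆ (Subtype.val : 𝔞 → Mat n) ⁻¹'
        {m : Mat n | ∀ i j, m i j ∈ Set.Icc (-R) R} := by
      intro M hM i j
      rw [Set.mem_Icc, ← abs_le]
      exact hbound M hM i j
    have hPcomp : IsCompact ((Subtype.val : 𝔞 → Mat n) ⁻¹'
        {m : Mat n | ∀ i j, m i j ∈ Set.Icc (-R) R}) := by
      rw [Topology.IsEmbedding.subtypeVal.isCompact_iff]
      have himg : (Subtype.val : 𝔞 → Mat n) '' ((Subtype.val : 𝔞 → Mat n) ⁻¹'
          {m : Mat n | ∀ i j, m i j ∈ Set.Icc (-R) R}) =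
          {m : Mat n | ∀ i j, m i j ∈ Set.Icc (-R) R} ∩ (𝔞 : Set (Mat n)) := by
        rw [Set.image_preimage_eq_inter_range, Subtype.range_val]
      rw [himg]
      exact (isCompact_box (fun _ _ => -R) (fun _ _ => R)).inter_right
        𝔞.closed_of_finiteDimensional
    have hScl : IsClosed S := by
      have : Continuous (fun M : 𝔞 => (QuotientGroup.mk (F M) : SL n ⧸ Γ)) :=
        continuous_quot_mk.comp hFcont
      exact hK.isClosed.preimage this
    exact hPcomp.of_isClosed_subset hScl hSsub
  exact hScomp.image hFcont
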